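/- The number of odd coefficients of the n-th Fibonacci polynomial equals the n-th term of Stern's diatomic sequence, where Stern's sequence satisfies v(0)=1, v(2n+1)=v(n), v(2n)=v(n)+v(n-1) for n ≥ 1. -/

import Mathlib

open Polynomial

/-- The number of odd coefficients of a polynomial over ℤ. -/
noncomputable def oddCoeffCount (p : Polynomial ℤ) : ℕ :=
  (p.support.filter fun j => Odd (p.coeff j)).card

/-- Fibonacci polynomials. -/
noncomputable def fibPoly : ℕ → Polynomial ℤ
  | 0 => 1
  | 1 => X
  | (n + 2) => X * fibPoly (n + 1) + fibPoly n

noncomputable def qq (n : ℕ) : Polynomial (ZMod 2) :=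
  (fibPoly n).map (Int.castRingHom (ZMod 2))

lemma qq_zero : qq 0 = 1 := by simp [qq, fibPoly]
lemma qq_one : qq 1 = X := by simp [qq, fibPoly]
lemma qq_step (n : ℕ) : qq (n + 2) = X * qq (n + 1) + qq n := by
  simp [qq, fibPoly, Polynomial.map_add, Polynomial.map_mul]

lemma oddCount_eq (n : ℕ) : oddCoeffCount (fibPoly n) = (qq n).support.card := by
  unfold oddCoeffCount
  congr 1
  ext j
  simp only [Finset.mem_filter, Polynomial.mem_support_iff, qq, Polynomial.coeff_map]
  constructor
  · rintro ⟨-, hodd⟩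
    simp only [Int.coe_castRingHom]
    rw [Ne, ZMod.intCast_zmod_eq_zero_iff_dvd]
    rw [Int.odd_iff] at hodd
    omega
  · intro h
    simp only [Int.coe_castRingHom] at h
    rw [Ne, ZMod.intCast_zmod_eq_zero_iff_dvd] at h
    constructor
    · intro hz; exact h (by simp [hz])
    · rw [Int.odd_iff]; omega

lemma sq_eq_expand (p : Polynomial (ZMod 2)) : p ^ 2 = expand (ZMod 2) 2 p := by
  have := Polynomial.map_frobenius_expand (p := 2) p
  rw [ZMod.frobenius_zmod, Polynomial.map_id] at this
  exact this.symm

lemma supp_sq (p : Polynomial (ZMod 2)) :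
    (p ^ 2).support = p.support.image (fun j => 2 * j) := by
  rw [sq_eq_expand]
  ext j
  simp only [Polynomial.mem_support_iff, Finset.mem_image,
    Polynomial.coeff_expand (by norm_num : 0 < 2)]
  constructor
  · intro h
    split_ifs at h with hd
    · obtain ⟨k, rfl⟩ := hd
      exact ⟨k, by simpa using h, rfl⟩
    · simp at h
  · rintro ⟨k, hk, rfl⟩
    rw [if_pos ⟨k, rfl⟩]
    simpa using hk

lemma supp_X_mul (p : Polynomial (ZMod 2)) :
    (X * p).support = p.support.image (fun j => j + 1) := by
  ext j
  cases j with
  | zero => simp [Polynomial.mem_support_iff, Polynomial.mul_coeff_zero]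
  | succ k => simp [Polynomial.mem_support_iff, Polynomial.coeff_X_mul]

lemma qq_parity : ∀ n : ℕ, ∀ j ∈ (qq n).support, j % 2 = n % 2 := by
  intro n
  induction n using Nat.strong_induction_on with
  | _ n ih =>
    match n with
    | 0 =>
      intro j hj
      rw [qq_zero, Polynomial.mem_support_iff, Polynomial.coeff_one] at hj
      rcases eq_or_ne j 0 with rfl | h
      · omega
      · simp [h] at hj
    | 1 =>
      intro j hj
      rw [qq_one, Polynomial.mem_support_iff, Polynomial.coeff_X] at hj
      split_ifs at hj with h
      · omega
      · simp at hj
    | (n + 2) =>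
      intro j hj
      rw [qq_step] at hj
      have := Polynomial.support_add hj
      rw [Finset.mem_union] at this
      rcases this with h | h
      · rw [supp_X_mul] at h
        obtain ⟨k, hk, rfl⟩ := Finset.mem_image.mp h
        have := ih (n + 1) (by omega) k hk
        omega
      · have := ih n (by omega) j h
        omega

lemma qq_ids : ∀ n : ℕ, qq (2 * n + 1) = X * (qq n) ^ 2 ∧
    qq (2 * n + 2) = (qq (n + 1)) ^ 2 + (qq n) ^ 2 := by
  have two0 : (2 : Polynomial (ZMod 2)) = 0 := CharTwo.two_eq_zero
  intro n
  induction n with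
  | zero =>
    constructor
    · show qq 1 = _
      rw [qq_one, qq_zero]; ring
    · show qq 2 = _
      have := qq_step 0
      rw [qq_zero, qq_one] at this
      rw [this, qq_one, qq_zero]
      ring
  | succ n ih =>
    obtain ⟨h1, h2⟩ := ih
    have hs := qq_step (2 * n + 1)
    simp only [show 2 * n + 1 + 2 = 2 * n + 3 by omega,
      show 2 * n + 1 + 1 = 2 * n + 2 by omega] at hs
    rw [h1, h2] at hs
    have key : qq (2 * n + 3) = X * (qq (n + 1)) ^ 2 := by
      rw [hs]; linear_combination (X * qq n ^ 2) * two0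
    constructor
    · rw [show 2 * (n + 1) + 1 = 2 * n + 3 by omega]; exact key
    · have hs2 := qq_step (2 * n + 2)
      simp only [show 2 * n + 2 + 2 = 2 * (n + 1) + 2 by omega,
        show 2 * n + 2 + 1 = 2 * n + 3 by omega] at hs2
      rw [key, h2] at hs2
      rw [hs2]
      have hq := qq_step n
      rw [show n + 1 + 1 = n + 2 by omega, hq]
      linear_combination (-(X * qq (n + 1) * qq n)) * two0

lemma card_X_mul_sq (p : Polynomial (ZMod 2)) :
    (X * p ^ 2).support.card = p.support.card := by
  rw [supp_X_mul, supp_sq,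
    Finset.card_image_of_injective _ (fun a b h => by simpa using h : Function.Injective (fun j : ℕ => j + 1)),
    Finset.card_image_of_injective _ (fun a b h => by simpa using h : Function.Injective (fun j : ℕ => 2 * j))]

theorem stmt_14 (v : ℕ → ℕ) (h0 : v 0 = 1)
    (hodd : ∀ n : ℕ, v (2 * n + 1) = v n)
    (heven : ∀ n : ℕ, 1 ≤ n → v (2 * n) = v n + v (n - 1)) :
    ∀ n : ℕ, oddCoeffCount (fibPoly n) = v n := by
  intro n
  induction n using Nat.strong_induction_on with
  | _ n ih =>
    rcases Nat.even_or_odd n with he | ho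
    · obtain ⟨m, hm⟩ := he
      rcases m with _ | k
      · have hn : n = 0 := by omega
        subst hn
        rw [oddCount_eq, qq_zero]
        have : (1 : Polynomial (ZMod 2)).support = {0} := by
          ext j
          rw [Polynomial.mem_support_iff, Polynomial.coeff_one]
          rcases eq_or_ne j 0 with rfl | h
          · simp
          · simp [h]
        rw [this]; simpa using h0.symm
      · rw [show (k + 1) + (k + 1) = 2 * k + 2 by omega] at hm
        subst hm
        rw [oddCount_eq, (qq_ids k).2]
        -- disjoint supports
        have hA := supp_sq (qq (k + 1))
        have hB := supp_sq (qq k)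
        have hdisj : Disjoint ((qq (k + 1)) ^ 2).support ((qq k) ^ 2).support := by
          rw [hA, hB, Finset.disjoint_left]
          intro a ha hb
          obtain ⟨x, hx, rfl⟩ := Finset.mem_image.mp ha
          obtain ⟨y, hy, hxy⟩ := Finset.mem_image.mp hb
          have hx' := qq_parity (k + 1) x hx
          have hy' := qq_parity k y hy
          omega
        have hsupp : ((qq (k + 1)) ^ 2 + (qq k) ^ 2).support
            = ((qq (k + 1)) ^ 2).support ∪ ((qq k) ^ 2).support := by
          ext j
          simp only [Polynomial.mem_support_iff, Finset.mem_union, Polynomial.coeff_add]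
          have hd : ((qq (k+1))^2).coeff j = 0 ∨ ((qq k)^2).coeff j = 0 := by
            by_contra hc
            push_neg at hc
            exact (Finset.disjoint_left.mp hdisj (Polynomial.mem_support_iff.mpr hc.1))
              (Polynomial.mem_support_iff.mpr hc.2)
          constructor
          · intro h
            by_contra hc
            push_neg at hc
            rw [hc.1, hc.2, add_zero] at h
            exact h rfl
          · intro h
            rcases hd with h0' | h0' <;> rcases h with h' | h' <;>
              simp_all
        rw [hsupp, Finset.card_union_of_disjoint hdisj]
        have c1 : ((qq (k + 1)) ^ 2).support.card = (qq (k + 1)).support.card := by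
          rw [hA, Finset.card_image_of_injective _
            (fun a b h => by simpa using h : Function.Injective (fun j : ℕ => 2 * j))]
        have c2 : ((qq k) ^ 2).support.card = (qq k).support.card := by
          rw [hB, Finset.card_image_of_injective _
            (fun a b h => by simpa using h : Function.Injective (fun j : ℕ => 2 * j))]
        rw [c1, c2]
        have i1 : (qq (k + 1)).support.card = v (k + 1) := by
          rw [← oddCount_eq]; exact ih (k + 1) (by omega)
        have i2 : (qq k).support.card = v k := by
          rw [← oddCount_eq]; exact ih k (by omega)
        rw [i1, i2]
        have := heven (k + 1) (by omega)
        simp only [show k + 1 - 1 = k by omega] at this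
        rw [show 2 * k + 2 = 2 * (k + 1) by omega, this]
    · obtain ⟨m, hm⟩ := ho
      subst hm
      rw [oddCount_eq, (qq_ids m).1, card_X_mul_sq, ← oddCount_eq,
        ih m (by omega), hodd m]
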